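/- For Hermitian unitary operators A₀, A₁ on H_A and commuting Hermitian unitary operators B₀, C₀₁ on H_B, and any angle α, the operator 2√2·1 − S'_α, where S'_α = cos α · S₊ + sin α · S₋ and S₊ = (A₀+A₁)⊗B₀ + (A₀−A₁)⊗C₀₁, S₋ = (A₀+A₁)⊗B₀ − (A₀−A₁)⊗C₀₁, equals the sum of squares (1/√2)[sin(π/4+α)·1⊗B₀ + cos(π/4+α)·1⊗C₀₁ − A₀⊗1]² + (1/√2)[sin(π/4+α)·1⊗B₀ − cos(π/4+α)·1⊗C₀₁ − A₁⊗1]². -/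

import Mathlib

/-- **Sum-of-squares decomposition of 2√2·1 − S'_α.**
A₀, A₁ are Hermitian unitaries on Alice's side, B₀, C₀₁ commuting Hermitian unitaries
on Bob's side; on the joint Hilbert space (tensoring with identity) Alice's operators
commute with Bob's.  With S₊ = (A₀+A₁)B₀ + (A₀−A₁)C₀₁, S₋ = (A₀+A₁)B₀ − (A₀−A₁)C₀₁ and
S'_α = cos α · S₊ + sin α · S₋, the operator 2√2·1 − S'_α equals
(1/√2)[sin(π/4+α)B₀ + cos(π/4+α)C₀₁ − A₀]² + (1/√2)[sin(π/4+α)B₀ − cos(π/4+α)C₀₁ − A₁]². -/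
theorem sos_decomposition_Salpha
    {H : Type*} [NormedAddCommGroup H] [InnerProductSpace ℂ H] [CompleteSpace H]
    (A₀ A₁ B₀ C₀₁ : H →L[ℂ] H)
    (hA₀sa : IsSelfAdjoint A₀) (hA₁sa : IsSelfAdjoint A₁)
    (hB₀sa : IsSelfAdjoint B₀) (hC₀₁sa : IsSelfAdjoint C₀₁)
    (hA₀u : A₀ * A₀ = 1) (hA₁u : A₁ * A₁ = 1)
    (hB₀u : B₀ * B₀ = 1) (hC₀₁u : C₀₁ * C₀₁ = 1)
    (hBC : Commute B₀ C₀₁)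
    (hcomm : ∀ A ∈ ({A₀, A₁} : Set (H →L[ℂ] H)), ∀ B ∈ ({B₀, C₀₁} : Set (H →L[ℂ] H)),
      Commute A B)
    (α : ℝ) :
    let Sp := (A₀ + A₁) * B₀ + (A₀ - A₁) * C₀₁
    let Sm := (A₀ + A₁) * B₀ - (A₀ - A₁) * C₀₁
    let S'α := (Real.cos α : ℂ) • Sp + (Real.sin α : ℂ) • Sm
    let Q₀ := (Real.sin (Real.pi / 4 + α) : ℂ) • B₀ + (Real.cos (Real.pi / 4 + α) : ℂ) • C₀₁ - A₀
    let Q₁ := (Real.sin (Real.pi / 4 + α) : ℂ) • B₀ - (Real.cos (Real.pi / 4 + α) : ℂ) • C₀₁ - A₁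
    ((2 * Real.sqrt 2 : ℝ) : ℂ) • (1 : H →L[ℂ] H) - S'α =
      (((Real.sqrt 2)⁻¹ : ℝ) : ℂ) • (Q₀ * Q₀) + (((Real.sqrt 2)⁻¹ : ℝ) : ℂ) • (Q₁ * Q₁) := by
  have hA0B : Commute A₀ B₀ := hcomm A₀ (by simp) B₀ (by simp)
  have hA0C : Commute A₀ C₀₁ := hcomm A₀ (by simp) C₀₁ (by simp)
  have hA1B : Commute A₁ B₀ := hcomm A₁ (by simp) B₀ (by simp)
  have hA1C : Commute A₁ C₀₁ := hcomm A₁ (by simp) C₀₁ (by simp)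
  intro Sp Sm S'α Q₀ Q₁
  have h2 : Real.sqrt 2 * Real.sqrt 2 = 2 := Real.mul_self_sqrt (by norm_num)
  have hs : Real.sqrt 2 * Real.sin (Real.pi / 4 + α) = Real.cos α + Real.sin α := by
    rw [Real.sin_add, Real.sin_pi_div_four, Real.cos_pi_div_four]; linear_combination (Real.cos α + Real.sin α)/2 * h2
  have hc : Real.sqrt 2 * Real.cos (Real.pi / 4 + α) = Real.cos α - Real.sin α := by
    rw [Real.cos_add, Real.sin_pi_div_four, Real.cos_pi_div_four]; linear_combination (Real.cos α - Real.sin α)/2 * h2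
  have hne : Real.sqrt 2 ≠ 0 := by positivity
  simp only [Sp, Sm, S'α, Q₀, Q₁]
  simp only [mul_add, add_mul, mul_sub, sub_mul, smul_mul_assoc, mul_smul_comm,
    smul_add, smul_sub, smul_smul, hA₀u, hA₁u, hB₀u, hC₀₁u, mul_one, one_mul,
    hBC.symm.eq, hA0B.symm.eq, hA0C.symm.eq, hA1B.symm.eq, hA1C.symm.eq]
  have hpy := Real.sin_sq_add_cos_sq (Real.pi / 4 + α)
  have hinv : (Real.sqrt 2)⁻¹ = Real.sqrt 2 / 2 := by
    field_simp
    rw [Real.sq_sqrt (by norm_num)]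
  ring_nf at hs hc hpy
  have e1 : Real.pi / 4 = Real.pi * (1 / 4) := by ring
  rw [e1]
  generalize Real.sin (Real.pi * (1 / 4) + α) = s at hs hpy ⊢
  generalize Real.cos (Real.pi * (1 / 4) + α) = c at hc hpy ⊢
  generalize Real.cos α = ca at hs hc ⊢
  generalize Real.sin α = sa at hs hc ⊢
  match_scalars
  all_goals norm_cast
  all_goals try ring
  all_goals simp only [hinv]
  all_goals try linear_combination hs
  all_goals try linear_combination -hs
  all_goals try linear_combination hc
  all_goals try linear_combination -hc
  all_goals try linear_combination Real.sqrt 2 * hpy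
  all_goals try linear_combination -(Real.sqrt 2) * hpy
  all_goals exact_mod_cast (by linear_combination -(Real.sqrt 2) * hpy : Real.sqrt 2 * 2 = Real.sqrt 2 / 2 * 2 + Real.sqrt 2 / 2 * s ^ 2 * 2 + Real.sqrt 2 / 2 * c ^ 2 * 2)
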